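/- Let d ≥ 2 be even and let G be a finite abelian group. Then there exists ε ∈ {1, −1} such that, in MvPolynomial G ℂ, det_d(C^G(x)) = ε · |G|^{|G|(d/2−1)} · ∏_{χ : G →* ℂˣ} (Σ_{g∈G} χ(g) · x_g), the product taken over all |G| complex characters of G. -/

import Mathlib

open Classical in
/-- Cayley's combinatorial hyperdeterminant of a `d`-way hypermatrix:
`det_d(X) = Σ_{σ₂,…,σ_d ∈ Perm I} sgn(σ₂)⋯sgn(σ_d) ∏_i X(i, σ₂ i, …, σ_d i)`. -/
noncomputable def hdet {I : Type*} [Fintype I] [DecidableEq I] {R : Type*} [CommRing R]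
    (d : ℕ) (X : (Fin d → I) → R) : R :=
  ∑ σ : Fin d → Equiv.Perm I,
    if ∀ h : 0 < d, σ ⟨0, h⟩ = 1 then
      (∏ ℓ, (Equiv.Perm.sign (σ ℓ) : ℤ)) • ∏ i, X fun ℓ => σ ℓ i
    else 0
/-- The group hypermatrix: entry at `(g₁, …, g_d)` is the variable `x_{g₁⋯g_d}`. -/
noncomputable def groupHyper (d : ℕ) (G : Type*) [Group G] :
    (Fin d → G) → MvPolynomial G ℂ :=
  fun g => MvPolynomial.X (List.ofFn g).prod

open Finset Equiv MvPolynomial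

private lemma sum_eq_sum_comp_inj {α β M : Type*} [Fintype α] [Fintype β] [DecidableEq β]
    [AddCommMonoid M] (ι : α → β) (hι : Function.Injective ι) (f : β → M)
    (h0 : ∀ b, (∀ a, ι a ≠ b) → f b = 0) : ∑ b, f b = ∑ a, f (ι a) := by
  classical
  rw [← Finset.sum_image (g := ι) (f := f) (fun a _ b _ h => hι h)]
  refine (Finset.sum_subset (Finset.subset_univ _) fun b _ hb => ?_).symm
  exact h0 b fun a ha => hb (Finset.mem_image.mpr ⟨a, Finset.mem_univ a, ha⟩)

private lemma char_sum {G : Type*} [CommGroup G] [Fintype G] (ψ : G →* ℂˣ) :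
    ∑ g : G, ((ψ g : ℂ)) = if ψ = 1 then (Fintype.card G : ℂ) else 0 := by
  split_ifs with h
  · subst h; simp
  · obtain ⟨a, ha⟩ : ∃ a, ψ a ≠ 1 := by
      by_contra hc; push_neg at hc
      exact h (MonoidHom.ext fun g => by simpa using hc g)
    have key : (ψ a : ℂ) * ∑ g : G, (ψ g : ℂ) = ∑ g : G, (ψ g : ℂ) := by
      rw [Finset.mul_sum]
      calc ∑ g : G, (ψ a : ℂ) * (ψ g : ℂ) = ∑ g : G, ((ψ (a * g) : ℂ)) := by
            refine Finset.sum_congr rfl fun g _ => ?_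
            rw [map_mul, Units.val_mul]
        _ = ∑ g : G, ((ψ g : ℂ)) := by
            simpa using Equiv.sum_comp (Equiv.mulLeft a) (fun g => ((ψ g : ℂ)))
    have ha' : (ψ a : ℂ) ≠ 1 := fun hh => ha (Units.ext (by simpa using hh))
    have h2 : ((ψ a : ℂ) - 1) * ∑ g : G, (ψ g : ℂ) = 0 := by
      rw [sub_mul, one_mul, key, sub_self]
    exact (mul_eq_zero.mp h2).resolve_left (sub_ne_zero.mpr ha')

private noncomputable def Hsum {I : Type*} [Fintype I] [DecidableEq I] {R : Type*} [CommRing R]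
    (d : ℕ) (X : (Fin d → I) → R) : R :=
  ∑ σ : Fin d → Equiv.Perm I,
    (∏ ℓ, ((Equiv.Perm.sign (σ ℓ) : ℤ) : R)) * ∏ i, X fun ℓ => σ ℓ i


private lemma prod_sum_swap {ι κ M : Type*} [Fintype ι] [Fintype κ] [DecidableEq ι]
    [CommSemiring M] (g : ι → κ → M) :
    ∏ i, ∑ j, g i j = ∑ f : ι → κ, ∏ i, g i (f i) := by
  rw [Finset.prod_univ_sum, Fintype.piFinset_univ]

set_option maxHeartbeats 2000000 in
private lemma Hsum_transform {I R : Type*} [Fintype I] [DecidableEq I] [CommRing R]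
    (d : ℕ) (A : Matrix I I R) (X : (Fin d → I) → R) :
    Hsum d (fun js => ∑ gs : Fin d → I, (∏ ℓ, A (js ℓ) (gs ℓ)) * X gs)
      = A.det ^ d * Hsum d X := by
  classical
  unfold Hsum
  beta_reduce
  have step1 : ∀ σ : Fin d → Equiv.Perm I,
      (∏ ℓ, ((Equiv.Perm.sign (σ ℓ) : ℤ) : R)) *
        (∏ i, ∑ gs : Fin d → I, (∏ ℓ, A (σ ℓ i) (gs ℓ)) * X gs)
        = ∑ Gm : I → Fin d → I,
            (∏ ℓ, (((Equiv.Perm.sign (σ ℓ) : ℤ) : R) * ∏ i, A (σ ℓ i) (Gm i ℓ))) *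
              ∏ i, X (Gm i) := by
    intro σ
    rw [prod_sum_swap (fun i gs => (∏ ℓ, A (σ ℓ i) (gs ℓ)) * X gs), Finset.mul_sum]
    refine Finset.sum_congr rfl fun Gm _ => ?_
    rw [Finset.prod_mul_distrib (f := fun i => ∏ ℓ, A (σ ℓ i) (Gm i ℓ)),
      Finset.prod_comm, Finset.prod_mul_distrib]
    ring
  rw [Finset.sum_congr rfl fun σ _ => step1 σ, Finset.sum_comm]
  have step2 : ∀ Gm : I → Fin d → I,
      (∑ σ : Fin d → Equiv.Perm I,
          (∏ ℓ, (((Equiv.Perm.sign (σ ℓ) : ℤ) : R) * ∏ i, A (σ ℓ i) (Gm i ℓ))) *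
            ∏ i, X (Gm i))
        = (∏ ℓ, ((A.submatrix id fun q => Gm q ℓ).det)) * ∏ i, X (Gm i) := by
    intro Gm
    rw [← Finset.sum_mul]
    congr 1
    rw [← prod_sum_swap
      (fun ℓ (τ : Equiv.Perm I) => ((Equiv.Perm.sign τ : ℤ) : R) * ∏ i, A (τ i) (Gm i ℓ))]
    refine Finset.prod_congr rfl fun ℓ _ => ?_
    rw [Matrix.det_apply']
    rfl
  rw [Finset.sum_congr rfl fun Gm _ => step2 Gm]
  have step3 : ∑ Gm : I → Fin d → I,
      (∏ ℓ, ((A.submatrix id fun q => Gm q ℓ).det)) * ∏ i, X (Gm i)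
      = ∑ σ : Fin d → Equiv.Perm I,
          (∏ ℓ, ((A.submatrix id fun q => σ ℓ q).det)) * ∏ i, X (fun ℓ => σ ℓ i) := by
    refine sum_eq_sum_comp_inj (fun (σ : Fin d → Equiv.Perm I) (q : I) (ℓ : Fin d) => σ ℓ q) ?_
      (fun Gm => (∏ ℓ, ((A.submatrix id fun q => Gm q ℓ).det)) * ∏ i, X (Gm i)) ?_
    · intro σ σ' h
      funext ℓ
      exact Equiv.ext fun q => congrFun (congrFun h q) ℓ
    · intro Gm hGm
      have hex : ∃ ℓ, ¬ Function.Injective fun q => Gm q ℓ := by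
        by_contra hc
        push_neg at hc
        have hb : ∀ ℓ, Function.Bijective fun q => Gm q ℓ :=
          fun ℓ => Finite.injective_iff_bijective.mp (hc ℓ)
        exact hGm (fun ℓ => Equiv.ofBijective _ (hb ℓ)) (by funext q ℓ; rfl)
      obtain ⟨ℓ, hℓ⟩ := hex
      simp only [Function.Injective, not_forall] at hℓ
      obtain ⟨i, j, hij, hne⟩ := hℓ
      have hz : (A.submatrix id fun q => Gm q ℓ).det = 0 :=
        Matrix.det_zero_of_column_eq hne (fun k => by
          simp only [Matrix.submatrix_apply, id_eq, hij])
      beta_reduce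
      rw [Finset.prod_eq_zero (Finset.mem_univ ℓ) hz, zero_mul]
  rw [step3, Finset.mul_sum]
  refine Finset.sum_congr rfl fun σ _ => ?_
  have hperm : ∀ ℓ, (A.submatrix id fun q => σ ℓ q).det
      = ((Equiv.Perm.sign (σ ℓ) : ℤ) : R) * A.det := fun ℓ => Matrix.det_permute' (σ ℓ) A
  simp only [hperm, Finset.prod_mul_distrib, Finset.prod_const, Finset.card_univ,
    Fintype.card_fin]
  ring


private lemma sign_cast_pow_even {R : Type*} [CommRing R] {d : ℕ} (hde : Even d) (s : ℤˣ) :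
    ((s : ℤ) : R) ^ d = 1 := by
  rcases Int.units_eq_one_or s with h | h <;> subst h
  · simp
  · simpa using hde.neg_one_pow (α := R)

private lemma Hsum_diag {I R : Type*} [Fintype I] [DecidableEq I] [CommRing R]
    (d : ℕ) [NeZero d] (hde : Even d) (Dd : I → R) :
    Hsum d (fun js => if (∀ ℓ, js ℓ = js 0) then Dd (js 0) else 0)
      = (Fintype.card (Equiv.Perm I)) • ∏ k, Dd k := by
  classical
  unfold Hsum
  beta_reduce
  rw [sum_eq_sum_comp_inj (fun (τ : Equiv.Perm I) (_ : Fin d) => τ)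
    (fun τ τ' hc => congrFun hc 0) _ ?h0]
  case h0 =>
    intro σ hσ
    have hex : ∃ ℓ, σ ℓ ≠ σ 0 := by
      by_contra hc
      push_neg at hc
      exact hσ (σ 0) (funext fun ℓ => (hc ℓ).symm)
    obtain ⟨ℓ, hℓ⟩ := hex
    have hex2 : ∃ i, σ ℓ i ≠ σ 0 i := by
      by_contra hc
      push_neg at hc
      exact hℓ (Equiv.ext hc)
    obtain ⟨i, hi⟩ := hex2
    have hz : (if (∀ ℓ : Fin d, σ ℓ i = σ 0 i) then Dd (σ 0 i) else 0) = 0 :=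
      if_neg fun hall => hi (hall ℓ)
    rw [Finset.prod_eq_zero (Finset.mem_univ i) hz, mul_zero]
  have hterm : ∀ τ : Equiv.Perm I,
      (∏ ℓ : Fin d, ((Equiv.Perm.sign τ : ℤ) : R)) *
        (∏ i, if (∀ _ : Fin d, τ i = τ i) then Dd (τ i) else 0) = ∏ k, Dd k := by
    intro τ
    rw [Finset.prod_const, Finset.card_univ, Fintype.card_fin, sign_cast_pow_even hde, one_mul]
    rw [Finset.prod_congr rfl fun i _ => if_pos fun _ => rfl]
    exact Equiv.prod_comp τ Dd
  rw [Finset.sum_congr rfl fun τ _ => hterm τ, Finset.sum_const, Finset.card_univ]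

private lemma Hsum_eq_card_smul_hdet {I R : Type*} [Fintype I] [DecidableEq I] [CommRing R]
    (d : ℕ) [NeZero d] (hde : Even d) (X : (Fin d → I) → R) :
    Hsum d X = (Fintype.card (Equiv.Perm I)) • hdet d X := by
  classical
  set S : Equiv.Perm I → R := fun τ => ((Equiv.Perm.sign τ : ℤ) : R) with hS
  set f : (Fin d → Equiv.Perm I) → R := fun σ =>
    (∏ ℓ, S (σ ℓ)) * ∏ i, X fun ℓ => σ ℓ i with hf
  set h : (Fin d → Equiv.Perm I) → R := fun σ => f (Function.update σ 0 1) with hh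
  have hd1 : 1 ≤ d := NeZero.one_le
  have hSmul : ∀ a b : Equiv.Perm I, S (a * b) = S a * S b := by
    intro a b; simp [hS, map_mul]
  -- step i
  have stepi : Hsum d X = ∑ σ : Fin d → Equiv.Perm I, h σ := by
    have key : ∀ σ : Fin d → Equiv.Perm I,
        f (fun ℓ => if ℓ = 0 then σ 0 else σ ℓ * σ 0) = h σ := by
      intro σ
      have hsign : (∏ ℓ, S (if ℓ = 0 then σ 0 else σ ℓ * σ 0))
          = ∏ ℓ, S (Function.update σ 0 1 ℓ) := by
        rw [← Finset.mul_prod_erase univ _ (Finset.mem_univ (0 : Fin d)),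
          ← Finset.mul_prod_erase univ (fun ℓ => S (Function.update σ 0 1 ℓ))
            (Finset.mem_univ (0 : Fin d))]
        rw [if_pos rfl, Function.update_self]
        have e1 : ∏ ℓ ∈ univ.erase (0 : Fin d), S (if ℓ = 0 then σ 0 else σ ℓ * σ 0)
            = (∏ ℓ ∈ univ.erase (0 : Fin d), S (σ ℓ)) * S (σ 0) ^ (d - 1) := by
          rw [Finset.prod_congr rfl fun ℓ hℓ => by
            rw [if_neg (Finset.mem_erase.mp hℓ).1, hSmul]]
          rw [Finset.prod_mul_distrib, Finset.prod_const, Finset.card_erase_of_mem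
            (Finset.mem_univ _), Finset.card_univ, Fintype.card_fin]
        have e2 : ∏ ℓ ∈ univ.erase (0 : Fin d), S (Function.update σ 0 1 ℓ)
            = ∏ ℓ ∈ univ.erase (0 : Fin d), S (σ ℓ) :=
          Finset.prod_congr rfl fun ℓ hℓ => by
            rw [Function.update_of_ne (Finset.mem_erase.mp hℓ).1]
        rw [e1, e2]
        have hp : S (σ 0) * S (σ 0) ^ (d - 1) = S (σ 0) ^ d := by
          rw [← pow_succ']
          congr 1
          omega
        have e3 : S (σ 0) * ((∏ ℓ ∈ univ.erase (0 : Fin d), S (σ ℓ)) * S (σ 0) ^ (d - 1))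
            = (∏ ℓ ∈ univ.erase (0 : Fin d), S (σ ℓ)) * S (σ 0) ^ d := by
          rw [← hp]; ring
        rw [e3, sign_cast_pow_even hde, mul_one]
        have : S (1 : Equiv.Perm I) = 1 := by simp [hS]
        rw [this, one_mul]
      have hXp : (∏ i, X fun ℓ => (if ℓ = 0 then σ 0 else σ ℓ * σ 0) i)
          = ∏ i, X fun ℓ => Function.update σ 0 1 ℓ i := by
        have lhs : (∏ i, X fun ℓ => (if ℓ = 0 then σ 0 else σ ℓ * σ 0) i)
            = ∏ i, (fun j => X fun ℓ => if ℓ = 0 then j else σ ℓ j) (σ 0 i) := by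
          refine Finset.prod_congr rfl fun i _ => ?_
          congr 1
          funext ℓ
          by_cases hℓ : ℓ = 0 <;> simp [hℓ]
        rw [lhs, Equiv.prod_comp (σ 0) (fun j => X fun ℓ => if ℓ = 0 then j else σ ℓ j)]
        refine Finset.prod_congr rfl fun i _ => ?_
        congr 1
        funext ℓ
        rw [Function.update_apply]
        by_cases hℓ : ℓ = 0 <;> simp [hℓ]
      simp only [hf, hh]
      rw [hsign, hXp]
    have hΦ : Function.Bijective
        (fun (σ : Fin d → Equiv.Perm I) (ℓ : Fin d) => if ℓ = 0 then σ 0 else σ ℓ * σ 0) := by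
      apply Function.bijective_iff_has_inverse.mpr
      refine ⟨fun σ ℓ => if ℓ = 0 then σ 0 else σ ℓ * (σ 0)⁻¹, ?_, ?_⟩
      · intro σ; funext ℓ
        by_cases hℓ : ℓ = 0 <;> simp [hℓ, mul_assoc]
      · intro σ; funext ℓ
        by_cases hℓ : ℓ = 0 <;> simp [hℓ, mul_assoc]
    have hre : ∑ σ : Fin d → Equiv.Perm I,
        f (fun ℓ => if ℓ = 0 then σ 0 else σ ℓ * σ 0) = ∑ σ : Fin d → Equiv.Perm I, f σ :=
      Fintype.sum_bijective _ hΦ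
        (fun σ => f (fun ℓ => if ℓ = 0 then σ 0 else σ ℓ * σ 0)) f (fun σ => rfl)
    calc Hsum d X = ∑ σ : Fin d → Equiv.Perm I, f σ := rfl
      _ = ∑ σ : Fin d → Equiv.Perm I,
            f (fun ℓ => if ℓ = 0 then σ 0 else σ ℓ * σ 0) := hre.symm
      _ = ∑ σ : Fin d → Equiv.Perm I, h σ := Finset.sum_congr rfl fun σ _ => key σ
  -- step ii
  have stepii : ∑ σ : Fin d → Equiv.Perm I, h σ
      = (Fintype.card (Equiv.Perm I)) •
          ∑ σ : Fin d → Equiv.Perm I, if σ 0 = 1 then h σ else 0 := by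
    have h1 : ∀ σ : Fin d → Equiv.Perm I,
        h σ = ∑ ρ : Equiv.Perm I, if σ 0 = ρ then h σ else 0 := by
      intro σ
      rw [Finset.sum_ite_eq univ (σ 0) (fun _ => h σ), if_pos (Finset.mem_univ _)]
    rw [Finset.sum_congr rfl fun σ _ => h1 σ, Finset.sum_comm]
    have h2 : ∀ ρ : Equiv.Perm I,
        (∑ σ : Fin d → Equiv.Perm I, if σ 0 = ρ then h σ else 0)
          = ∑ σ : Fin d → Equiv.Perm I, if σ 0 = 1 then h σ else 0 := by
      intro ρ
      have hu : Function.Bijective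
          (fun (σ : Fin d → Equiv.Perm I) => Function.update σ 0 (σ 0 * ρ)) := by
        apply Function.bijective_iff_has_inverse.mpr
        refine ⟨fun σ => Function.update σ 0 (σ 0 * ρ⁻¹), ?_, ?_⟩
        · intro σ
          simp [Function.update_idem, Function.update_self, mul_assoc,
            Function.update_eq_self]
        · intro σ
          simp [Function.update_idem, Function.update_self, mul_assoc,
            Function.update_eq_self]
      refine (Fintype.sum_bijective _ hu
        (fun σ : Fin d → Equiv.Perm I => if σ 0 = 1 then h σ else 0)
        (fun σ : Fin d → Equiv.Perm I => if σ 0 = ρ then h σ else 0) fun σ => ?_).symm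
      have hc : (Function.update σ 0 (σ 0 * ρ)) 0 = σ 0 * ρ := Function.update_self _ _ _
      have hcond : ((Function.update σ 0 (σ 0 * ρ)) 0 = ρ) ↔ (σ 0 = 1) := by
        rw [hc, mul_eq_right]
      have hhσ : h (Function.update σ 0 (σ 0 * ρ)) = h σ := by
        simp only [hh, Function.update_idem]
      beta_reduce
      by_cases hσ : σ 0 = 1
      · rw [if_pos hσ, if_pos (hcond.mpr hσ), hhσ]
      · rw [if_neg hσ, if_neg (fun hcc => hσ (hcond.mp hcc))]
    rw [Finset.sum_congr rfl fun ρ _ => h2 ρ, Finset.sum_const, Finset.card_univ]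
  -- step iii
  have stepiii : (∑ σ : Fin d → Equiv.Perm I, if σ 0 = 1 then h σ else 0) = hdet d X := by
    unfold hdet
    refine Finset.sum_congr rfl fun σ _ => ?_
    have h0d : 0 < d := NeZero.pos d
    have hzero : (⟨0, h0d⟩ : Fin d) = 0 := by
      apply Fin.ext
      simp
    by_cases hσ : σ 0 = 1
    · rw [if_pos hσ, if_pos (fun _ => by rw [hzero]; exact hσ)]
      have : Function.update σ 0 (1 : Equiv.Perm I) = σ := by
        rw [← hσ, Function.update_eq_self]
      simp only [hh, hf, this]
      rw [zsmul_eq_mul, Int.cast_prod]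
    · rw [if_neg hσ, if_neg (fun hc => hσ (by rw [← hzero]; exact hc h0d))]
  rw [stepi, stepii, stepiii]


set_option maxHeartbeats 1000000 in
private lemma diag_sum {G : Type*} [CommGroup G] [Fintype G] [DecidableEq G]
    (d : ℕ) [NeZero d] (χ : Fin d → (G →* ℂˣ)) :
    ∑ gs : Fin d → G, (∏ ℓ, MvPolynomial.C ((χ ℓ (gs ℓ) : ℂ))) * MvPolynomial.X (∏ i, gs i)
      = if ∀ ℓ, χ ℓ = χ 0 then
          MvPolynomial.C ((Fintype.card G : ℂ) ^ (d - 1)) *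
            ∑ g : G, MvPolynomial.C ((χ 0 g : ℂ)) * MvPolynomial.X g
        else 0 := by
  classical
  set ψ : Fin d → (G →* ℂˣ) := fun ℓ => χ ℓ * (χ 0)⁻¹ with hψ
  set P : (Fin d → G) → G := fun f => ∏ ℓ ∈ univ.erase (0 : Fin d), f ℓ with hP
  have hPupd : ∀ (f : Fin d → G) (x : G), P (Function.update f 0 x) = P f := by
    intro f x
    exact Finset.prod_congr rfl fun ℓ hℓ =>
      Function.update_of_ne (Finset.mem_erase.mp hℓ).1 _ _
  have hprod : ∀ f : Fin d → G, (∏ ℓ, f ℓ) = f 0 * P f := fun f =>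
    (Finset.mul_prod_erase univ f (Finset.mem_univ 0)).symm
  -- the reparametrizing bijection
  have hE : Function.Bijective (fun (gs : Fin d → G) => Function.update gs 0 (∏ ℓ, gs ℓ)) := by
    apply Function.bijective_iff_has_inverse.mpr
    refine ⟨fun ts => Function.update ts 0 (ts 0 * (P ts)⁻¹), ?_, ?_⟩
    · intro gs
      beta_reduce
      rw [Function.update_self, hPupd, Function.update_idem, hprod gs,
        mul_inv_cancel_right, Function.update_eq_self]
    · intro ts
      beta_reduce
      rw [hprod (Function.update ts 0 (ts 0 * (P ts)⁻¹)), Function.update_self, hPupd,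
        mul_assoc, inv_mul_cancel, mul_one, Function.update_idem, Function.update_eq_self]
  -- the factored summand
  set T : (Fin d → G) → MvPolynomial G ℂ := fun ts => ∏ ℓ,
    (if ℓ = (0 : Fin d) then MvPolynomial.C ((χ 0 (ts ℓ) : ℂ)) * MvPolynomial.X (ts ℓ)
     else MvPolynomial.C ((ψ ℓ (ts ℓ) : ℂ))) with hT
  have key : ∀ gs : Fin d → G,
      (∏ ℓ, MvPolynomial.C ((χ ℓ (gs ℓ) : ℂ))) * MvPolynomial.X (∏ i, gs i)
        = T (Function.update gs 0 (∏ ℓ, gs ℓ)) := by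
    intro gs
    have herase : ∏ ℓ ∈ univ.erase (0 : Fin d),
        (if ℓ = (0 : Fin d) then
            MvPolynomial.C ((χ 0 ((Function.update gs 0 (∏ ℓ, gs ℓ)) ℓ) : ℂ)) *
              MvPolynomial.X ((Function.update gs 0 (∏ ℓ, gs ℓ)) ℓ)
          else MvPolynomial.C ((ψ ℓ ((Function.update gs 0 (∏ ℓ, gs ℓ)) ℓ) : ℂ)))
        = ∏ ℓ ∈ univ.erase (0 : Fin d), MvPolynomial.C ((ψ ℓ (gs ℓ) : ℂ)) := by
      refine Finset.prod_congr rfl fun ℓ hℓ => ?_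
      have hℓ0 := (Finset.mem_erase.mp hℓ).1
      rw [if_neg hℓ0, Function.update_of_ne hℓ0]
    have hRHS : T (Function.update gs 0 (∏ ℓ, gs ℓ))
        = (MvPolynomial.C ((χ 0 (∏ i, gs i) : ℂ)) * MvPolynomial.X (∏ i, gs i)) *
            ∏ ℓ ∈ univ.erase (0 : Fin d), MvPolynomial.C ((ψ ℓ (gs ℓ) : ℂ)) := by
      rw [hT]
      beta_reduce
      rw [← Finset.mul_prod_erase univ _ (Finset.mem_univ (0 : Fin d)), if_pos rfl,
        Function.update_self, herase]
    rw [hRHS]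
    -- the complex-number identity
    have hunits : (∏ ℓ, χ ℓ (gs ℓ)) = χ 0 (∏ i, gs i) * ∏ ℓ ∈ univ.erase (0 : Fin d), ψ ℓ (gs ℓ) := by
      have h1 : χ 0 (∏ i, gs i) = ∏ ℓ, χ 0 (gs ℓ) := map_prod _ _ _
      have h2 : ∀ ℓ, ψ ℓ (gs ℓ) = χ ℓ (gs ℓ) * (χ 0 (gs ℓ))⁻¹ := fun ℓ => rfl
      rw [h1, ← Finset.mul_prod_erase univ (fun ℓ => χ 0 (gs ℓ)) (Finset.mem_univ 0),
        ← Finset.mul_prod_erase univ (fun ℓ => χ ℓ (gs ℓ)) (Finset.mem_univ 0),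
        mul_assoc, ← Finset.prod_mul_distrib]
      congr 1
      refine Finset.prod_congr rfl fun ℓ _ => ?_
      rw [h2 ℓ, mul_comm, inv_mul_cancel_right]
    have hC : (∏ ℓ, MvPolynomial.C ((χ ℓ (gs ℓ) : ℂ)) : MvPolynomial G ℂ)
        = MvPolynomial.C ((χ 0 (∏ i, gs i) : ℂ)) *
            ∏ ℓ ∈ univ.erase (0 : Fin d), MvPolynomial.C ((ψ ℓ (gs ℓ) : ℂ)) := by
      rw [← map_prod, ← map_prod, ← map_mul]
      congr 1
      have := congrArg (Units.val) hunits
      push_cast at this ⊢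
      simpa using this
    rw [hC]
    ring
  rw [Finset.sum_congr rfl fun gs _ => key gs]
  rw [Fintype.sum_bijective _ hE _ T fun gs => rfl]
  rw [hT, ← prod_sum_swap
    (fun (ℓ : Fin d) (t : G) => if ℓ = (0 : Fin d) then
        MvPolynomial.C ((χ 0 t : ℂ)) * MvPolynomial.X t
      else MvPolynomial.C ((ψ ℓ t : ℂ)))]
  rw [← Finset.mul_prod_erase univ _ (Finset.mem_univ (0 : Fin d))]
  have h00 : (∑ t : G, if (0 : Fin d) = 0 then MvPolynomial.C ((χ 0 t : ℂ)) * MvPolynomial.X t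
      else MvPolynomial.C ((ψ (0:Fin d) t : ℂ)))
      = ∑ g : G, MvPolynomial.C ((χ 0 g : ℂ)) * MvPolynomial.X g := by
    refine Finset.sum_congr rfl fun t _ => if_pos rfl
  have herase2 : ∏ ℓ ∈ univ.erase (0 : Fin d),
      (∑ t : G, if ℓ = 0 then MvPolynomial.C ((χ 0 t : ℂ)) * MvPolynomial.X t
        else MvPolynomial.C ((ψ ℓ t : ℂ)))
      = ∏ ℓ ∈ univ.erase (0 : Fin d),
          MvPolynomial.C (if ψ ℓ = 1 then (Fintype.card G : ℂ) else 0) := by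
    refine Finset.prod_congr rfl fun ℓ hℓ => ?_
    have hℓ0 := (Finset.mem_erase.mp hℓ).1
    rw [Finset.sum_congr rfl fun t _ => if_neg hℓ0, ← map_sum, char_sum]
  rw [h00, herase2]
  by_cases hall : ∀ ℓ, χ ℓ = χ 0
  · rw [if_pos hall]
    have hψ1 : ∀ ℓ, ψ ℓ = 1 := fun ℓ => by
      simp only [hψ]
      rw [hall ℓ]
      exact mul_inv_cancel (χ 0)
    rw [Finset.prod_congr rfl fun ℓ _ => by rw [hψ1 ℓ, if_pos rfl]]
    rw [Finset.prod_const, Finset.card_erase_of_mem (Finset.mem_univ _), Finset.card_univ,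
      Fintype.card_fin, ← map_pow]
    ring
  · rw [if_neg hall]
    push_neg at hall
    obtain ⟨ℓ, hℓ⟩ := hall
    have hℓ0 : ℓ ≠ 0 := fun hc => hℓ (by rw [hc])
    have hψℓ : ψ ℓ ≠ 1 := fun hc => by
      simp only [hψ] at hc
      exact hℓ (mul_inv_eq_one.mp hc)
    rw [Finset.prod_eq_zero (Finset.mem_erase.mpr ⟨hℓ0, Finset.mem_univ ℓ⟩)
      (by rw [if_neg hψℓ, map_zero]), mul_zero]


set_option maxHeartbeats 2000000 in
/-- For even `d ≥ 2` and a finite abelian group `G`, the group hyperdeterminant factors into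
linear forms: `det_d(C^G(x)) = ± |G|^{|G|(d/2-1)} ∏_χ (Σ_g χ(g) x_g)`, the product over all
complex characters `χ : G →* ℂˣ` (which form a finite set of cardinality `|G|`). -/
theorem abelian_group_hyperdeterminant (d : ℕ) (hd : 2 ≤ d) (hde : Even d)
    (G : Type*) [CommGroup G] [Fintype G] [DecidableEq G] [Fintype (G →* ℂˣ)] :
    ∃ ε : ℂ, (ε = 1 ∨ ε = -1) ∧
      hdet d (groupHyper d G) =
        MvPolynomial.C (ε * (Fintype.card G : ℂ) ^ (Fintype.card G * (d / 2 - 1))) *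
          ∏ χ : G →* ℂˣ, ∑ g : G, MvPolynomial.C ((χ g : ℂ)) * MvPolynomial.X g := by
  classical
  haveI : NeZero d := ⟨by omega⟩
  obtain ⟨m, hm⟩ := hde
  have hm1 : 1 ≤ m := by omega
  -- duality between G and its character group
  haveI : NeZero ((Monoid.exponent G : ℂ)) :=
    ⟨Nat.cast_ne_zero.mpr (Monoid.exponent_ne_zero_of_finite)⟩
  obtain ⟨me⟩ := CommGroup.monoidHom_mulEquiv_of_hasEnoughRootsOfUnity G ℂ
  set e : G ≃ (G →* ℂˣ) := me.toEquiv.symm with he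
  set n := Fintype.card G with hn
  have hn0 : (n : ℂ) ≠ 0 := Nat.cast_ne_zero.mpr Fintype.card_ne_zero
  set L : (G →* ℂˣ) → MvPolynomial G ℂ :=
    fun χ => ∑ g : G, MvPolynomial.C ((χ g : ℂ)) * MvPolynomial.X g with hL
  set Cg : (Fin d → G) → MvPolynomial G ℂ := fun gs => MvPolynomial.X (∏ i, gs i) with hCg
  have hCgeq : groupHyper d G = Cg := by
    funext gs
    rw [groupHyper, hCg, List.prod_ofFn]
  set U : Matrix G G ℂ := Matrix.of fun k g => ((e k g : ℂ)) with hU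
  set A : Matrix G G (MvPolynomial G ℂ) := U.map MvPolynomial.C with hA
  -- each entry of the transformed hypermatrix
  have hY : ∀ ks : Fin d → G,
      (∑ gs : Fin d → G, (∏ ℓ, A (ks ℓ) (gs ℓ)) * Cg gs)
        = (if (∀ ℓ, ks ℓ = ks 0) then
            MvPolynomial.C ((n : ℂ) ^ (d - 1)) * L (e (ks 0)) else 0) := by
    intro ks
    have hent : ∀ gs : Fin d → G,
        (∏ ℓ, A (ks ℓ) (gs ℓ)) * Cg gs
          = (∏ ℓ, MvPolynomial.C ((e (ks ℓ) (gs ℓ) : ℂ))) * MvPolynomial.X (∏ i, gs i) := by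
      intro gs
      simp [hA, hU, hCg, Matrix.map_apply]
    rw [Finset.sum_congr rfl fun gs _ => hent gs, diag_sum d (fun ℓ => e (ks ℓ))]
    by_cases hc : ∀ ℓ, ks ℓ = ks 0
    · rw [if_pos (fun ℓ => congrArg e (hc ℓ)), if_pos hc, hL]
    · rw [if_neg (fun hcc => hc fun ℓ => e.injective (hcc ℓ)), if_neg hc]
  have hHY : Hsum d (fun ks => ∑ gs : Fin d → G, (∏ ℓ, A (ks ℓ) (gs ℓ)) * Cg gs)
      = Hsum d (fun ks => if (∀ ℓ, ks ℓ = ks 0) then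
          (fun k => MvPolynomial.C ((n : ℂ) ^ (d - 1)) * L (e k)) (ks 0) else 0) :=
    congrArg (Hsum d) (funext hY)
  have h1 : A.det ^ d * Hsum d Cg
      = (Fintype.card (Equiv.Perm G)) •
          (MvPolynomial.C ((n : ℂ) ^ (d - 1)) ^ n * ∏ χ : G →* ℂˣ, L χ) := by
    rw [← Hsum_transform d A Cg, hHY,
      Hsum_diag d ⟨m, hm⟩ (fun k => MvPolynomial.C ((n : ℂ) ^ (d - 1)) * L (e k))]
    congr 1
    rw [Finset.prod_mul_distrib, Finset.prod_const, Finset.card_univ, ← hn,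
      Equiv.prod_comp e L]
  have h2 : Hsum d Cg = (Fintype.card (Equiv.Perm G)) • hdet d Cg :=
    Hsum_eq_card_smul_hdet d ⟨m, hm⟩ Cg
  have hcancel : ∀ x y : MvPolynomial G ℂ,
      (Fintype.card (Equiv.Perm G)) • x = (Fintype.card (Equiv.Perm G)) • y → x = y := by
    intro x y hxy
    have hx : ((Fintype.card (Equiv.Perm G) : ℂ)) • x
        = ((Fintype.card (Equiv.Perm G) : ℂ)) • y := by
      rw [Nat.cast_smul_eq_nsmul, Nat.cast_smul_eq_nsmul]
      exact hxy
    exact smul_right_injective _ (Nat.cast_ne_zero.mpr Fintype.card_ne_zero) hx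
  have key : A.det ^ d * hdet d Cg
      = MvPolynomial.C ((n : ℂ) ^ (d - 1)) ^ n * ∏ χ : G →* ℂˣ, L χ := by
    apply hcancel
    rw [← h1, h2, mul_smul_comm]
  -- determinant of the character matrix
  have hAdet : A.det = MvPolynomial.C U.det :=
    (RingHom.map_det (MvPolynomial.C : ℂ →+* MvPolynomial G ℂ) U).symm
  set j : G → G := fun k => e.symm ((e k)⁻¹) with hj
  have hjap : ∀ x, e (j x) = (e x)⁻¹ := fun x => Equiv.apply_symm_apply e _
  have hjinv : Function.Involutive j := fun k =>
    e.injective (by rw [hjap, hjap]; exact inv_inv (e k))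
  set πj : Equiv.Perm G := Function.Involutive.toPerm j hjinv with hπj
  set B : Matrix G G ℂ := Matrix.of fun g k => ((e k g : ℂ))⁻¹ with hB
  have hUB : U * B = (n : ℂ) • (1 : Matrix G G ℂ) := by
    ext k k'
    rw [Matrix.mul_apply]
    have hent : ∀ g, U k g * B g k' = (((e k * (e k')⁻¹) g : ℂˣ) : ℂ) := by
      intro g
      simp [hU, hB, Units.val_mul]
    rw [Finset.sum_congr rfl fun g _ => hent g, char_sum]
    have hcond : (e k * (e k')⁻¹ = 1) ↔ (k = k') :=
      ⟨fun h => e.injective (mul_inv_eq_one.mp h),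
       fun h => by rw [h]; exact mul_inv_cancel (e k')⟩
    rw [Matrix.smul_apply, Matrix.one_apply]
    by_cases hkk : k = k'
    · rw [if_pos (hcond.mpr hkk), if_pos hkk, smul_eq_mul, mul_one]
    · rw [if_neg (fun hcc => hkk (hcond.mp hcc)), if_neg hkk, smul_eq_mul, mul_zero]
  have hBdet : B.det = ((Equiv.Perm.sign πj : ℤ) : ℂ) * U.det := by
    have hBsub : B = (U.transpose).submatrix id πj := by
      ext g k
      have h1' : e (πj k) = (e k)⁻¹ := by
        rw [hπj]
        show e (j k) = (e k)⁻¹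
        rw [hj]
        exact Equiv.apply_symm_apply e _
      simp [hB, Matrix.submatrix_apply, Matrix.transpose_apply, hU, h1']
    rw [hBsub, Matrix.det_permute', Matrix.det_transpose]
  set s : ℂ := ((Equiv.Perm.sign πj : ℤ) : ℂ) with hs
  have hs2 : s * s = 1 := by
    rcases Int.units_eq_one_or (Equiv.Perm.sign πj) with h | h <;> rw [hs, h] <;> norm_num
  have hdet2 : U.det ^ 2 = s * (n : ℂ) ^ n := by
    have h3 : U.det * B.det = (n : ℂ) ^ n := by
      rw [← Matrix.det_mul, hUB, Matrix.det_smul, Matrix.det_one, mul_one, ← hn]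
    have h4 : s * U.det ^ 2 = (n : ℂ) ^ n := by
      rw [← h3, hBdet]
      ring
    calc U.det ^ 2 = (s * s) * U.det ^ 2 := by rw [hs2, one_mul]
      _ = s * (s * U.det ^ 2) := by ring
      _ = s * (n : ℂ) ^ n := by rw [h4]
  set ε : ℂ := s ^ m with hε
  have hεpm : ε = 1 ∨ ε = -1 := by
    have hneg : ((((-1 : ℤˣ) : ℤ)) : ℂ) = -1 := by norm_num
    rcases Int.units_eq_one_or (Equiv.Perm.sign πj) with h | h
    · left
      norm_num [hε, hs, h]
    · rcases Nat.even_or_odd m with hev | hod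
      · left
        rw [hε, hs, h, hneg]
        exact hev.neg_one_pow
      · right
        rw [hε, hs, h, hneg]
        exact hod.neg_one_pow
  have hε2 : ε * ε = 1 := by
    rcases hεpm with h | h <;> rw [h] <;> norm_num
  have hUd : U.det ^ d = ε * (n : ℂ) ^ (n * m) := by
    have h5 : U.det ^ d = (U.det ^ 2) ^ m := by
      rw [← pow_mul]
      congr 1
      omega
    rw [h5, hdet2, mul_pow, ← pow_mul, hε, mul_comm n m]
  rw [hCgeq]
  refine ⟨ε, hεpm, ?_⟩
  have key2 : MvPolynomial.C (ε * (n : ℂ) ^ (n * m)) * hdet d Cg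
      = MvPolynomial.C ((n : ℂ) ^ ((d - 1) * n)) * ∏ χ : G →* ℂˣ, L χ := by
    have hAd : A.det ^ d = MvPolynomial.C (ε * (n : ℂ) ^ (n * m)) := by
      rw [hAdet, ← map_pow, hUd]
    rw [← hAd, key, ← map_pow, ← pow_mul]
  have harith : (d - 1) * n = n * m + n * (m - 1) := by
    obtain ⟨k, rfl⟩ : ∃ k, m = k + 1 := ⟨m - 1, by omega⟩
    have e1 : d - 1 = 2 * k + 1 := by omega
    have e2 : k + 1 - 1 = k := by omega
    rw [e1, e2]
    ring
  have hfinal : MvPolynomial.C ((n : ℂ) ^ (n * m)) * hdet d Cg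
      = MvPolynomial.C ((n : ℂ) ^ (n * m)) *
          (MvPolynomial.C (ε * (n : ℂ) ^ (n * (m - 1))) * ∏ χ : G →* ℂˣ, L χ) := by
    calc MvPolynomial.C ((n : ℂ) ^ (n * m)) * hdet d Cg
        = MvPolynomial.C ε * (MvPolynomial.C (ε * (n : ℂ) ^ (n * m)) * hdet d Cg) := by
          rw [← mul_assoc, ← map_mul, ← mul_assoc, hε2, one_mul]
      _ = MvPolynomial.C ε *
            (MvPolynomial.C ((n : ℂ) ^ ((d - 1) * n)) * ∏ χ : G →* ℂˣ, L χ) := by rw [key2]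
      _ = MvPolynomial.C ((n : ℂ) ^ (n * m)) *
            (MvPolynomial.C (ε * (n : ℂ) ^ (n * (m - 1))) * ∏ χ : G →* ℂˣ, L χ) := by
          rw [harith, pow_add, map_mul, map_mul]
          ring
  have hCn0 : (MvPolynomial.C ((n : ℂ) ^ (n * m)) : MvPolynomial G ℂ) ≠ 0 := by
    rw [Ne, MvPolynomial.C_eq_zero]
    exact pow_ne_zero _ hn0
  have hres := mul_left_cancel₀ hCn0 hfinal
  have hdm : n * (d / 2 - 1) = n * (m - 1) := by
    have : d / 2 = m := by omega
    rw [this]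
  rw [hdm]
  exact hres
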